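/- Let f be a probability density on ℝ, symmetric about zero, absolutely continuous with bounded and integrable derivative f', and let F be its distribution function. Then there exists a constant C > 0, depending only on f, such that for all θ ∈ ℝ: | ∫_ℝ (2F(y) − 1)·f(y − θ) dy − 2θ·∫_ℝ f(y)² dy | ≤ C·θ². -/

import Mathlib

open MeasureTheory

/-- For a symmetric, absolutely continuous probability density `f` on `ℝ` with
bounded integrable derivative `f'` and cdf `F`, there is `C > 0` (depending only on `f`) with
`| ∫ (2F(y)−1) f(y−θ) dy − 2θ ∫ f² | ≤ C θ²` for all `θ`. -/
theorem cdf_shift_first_order_expansion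
    (f f' : ℝ → ℝ)
    (hfnn : ∀ x, 0 ≤ f x) (hfint : Integrable f)
    (hfprob : ∫ x, f x = 1)
    (hfsymm : ∀ x, f (-x) = f x)
    (hac : ∀ a b : ℝ, f b - f a = ∫ x in a..b, f' x)
    (hf'meas : Measurable f')
    (hf'bdd : ∃ M : ℝ, ∀ x, |f' x| ≤ M)
    (hf'int : Integrable f')
    (F : ℝ → ℝ) (hF : ∀ x, F x = ∫ y in Set.Iic x, f y) :
    ∃ C > (0 : ℝ), ∀ θ : ℝ,
      |(∫ y : ℝ, (2 * F y - 1) * f (y - θ)) - 2 * θ * ∫ y : ℝ, (f y) ^ 2| ≤ C * θ ^ 2 := by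
  obtain ⟨M, hM⟩ := hf'bdd
  have hM0 : 0 ≤ M := le_trans (abs_nonneg _) (hM 0)
  -- f is Lipschitz with constant M
  have hlip : ∀ a b : ℝ, |f b - f a| ≤ M * |b - a| := by
    intro a b
    rw [hac a b]
    have h := intervalIntegral.norm_integral_le_of_norm_le_const
      (C := M) (f := f') (a := a) (b := b) (fun x _ => hM x)
    simpa [Real.norm_eq_abs, abs_sub_comm b a] using h
  have hfcont : Continuous f := by
    have : LipschitzWith (Real.toNNReal M) f := by
      apply LipschitzWith.of_dist_le_mul
      intro x y
      simpa [Real.dist_eq, Real.coe_toNNReal M hM0] using hlip y x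
    exact this.continuous
  have hfmeas : Measurable f := hfcont.measurable
  -- f is bounded
  have hfbdd : ∀ x, |f x| ≤ |f 0| + ∫ t, |f' t| := by
    intro x
    have h1 : |f x - f 0| ≤ ∫ t, |f' t| := by
      rw [hac 0 x]
      have h1 := intervalIntegral.norm_integral_le_integral_norm_uIoc
        (a := 0) (b := x) (f := f') (μ := volume)
      have h2 : (∫ t in Set.uIoc 0 x, ‖f' t‖) ≤ ∫ t, |f' t| := by
        refine setIntegral_le_integral hf'int.abs (Filter.Eventually.of_forall ?_)
        intro t; exact abs_nonneg _
      exact le_trans h1 h2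
    calc |f x| = |f 0 + (f x - f 0)| := by ring_nf
    _ ≤ |f 0| + |f x - f 0| := abs_add_le _ _
    _ ≤ |f 0| + ∫ t, |f' t| := by linarith
  -- F is monotone, measurable, bounded
  have hFmono : Monotone F := by
    intro a b hab
    rw [hF a, hF b]
    exact setIntegral_mono_set hfint.integrableOn
      (Filter.Eventually.of_forall (fun x => hfnn x))
      (Filter.Eventually.of_forall (Set.Iic_subset_Iic.mpr hab))
  have hFmeas : Measurable F := hFmono.measurable
  have hF0 : ∀ x, 0 ≤ F x := by
    intro x; rw [hF x]
    exact setIntegral_nonneg measurableSet_Iic (fun y _ => hfnn y)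
  have hF1 : ∀ x, F x ≤ 1 := by
    intro x; rw [hF x, ← hfprob]
    exact setIntegral_le_integral hfint (Filter.Eventually.of_forall hfnn)
  have hFabs : ∀ x, |2 * F x - 1| ≤ 1 := by
    intro x
    rw [abs_le]
    constructor <;> [linarith [hF0 x]; linarith [hF1 x]]
  -- difference of CDF as interval integral
  have hFdiff : ∀ t θ : ℝ, F (t + θ) - F t = ∫ y in t..(t + θ), f y := by
    intro t θ
    rw [hF (t + θ), hF t]
    exact intervalIntegral.integral_Iic_sub_Iic hfint.integrableOn hfint.integrableOn
  -- key pointwise Taylor bound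
  have hR : ∀ θ t : ℝ, |(F (t + θ) - F t) - θ * f t| ≤ M * θ ^ 2 := by
    intro θ t
    rw [hFdiff t θ]
    have hconst : θ * f t = ∫ _ in t..(t + θ), f t := by
      rw [intervalIntegral.integral_const]
      simp [mul_comm]
    rw [hconst, ← intervalIntegral.integral_sub
      (hfcont.intervalIntegrable t (t + θ)) intervalIntegrable_const]
    have key : ∀ y ∈ Set.uIoc t (t + θ), ‖f y - f t‖ ≤ M * |θ| := by
      intro y hy
      have hy' : |y - t| ≤ |θ| := by
        rcases Set.mem_uIoc.mp hy with h | h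
        · rw [abs_le]
          constructor <;> [nlinarith [h.1, h.2, abs_nonneg θ, le_abs_self θ]; skip]
          have := h.2
          have := le_abs_self θ
          linarith
        · rw [abs_le]
          constructor
          · have := neg_abs_le θ
            linarith [h.1]
          · linarith [h.2, abs_nonneg θ]
      calc ‖f y - f t‖ = |f y - f t| := rfl
      _ ≤ M * |y - t| := hlip t y
      _ ≤ M * |θ| := by nlinarith
    have h := intervalIntegral.norm_integral_le_of_norm_le_const key
    have : |t + θ - t| = |θ| := by ring_nf
    rw [this] at h
    calc |∫ y in t..(t + θ), (f y - f t)| ≤ M * |θ| * |θ| := h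
    _ = M * θ ^ 2 := by rw [mul_assoc, ← pow_two, sq_abs]
  -- F(-x) = 1 - F(x)
  have hFsymm : ∀ x, F (-x) = 1 - F x := by
    intro x
    have h1 : F (-x) = ∫ y in Set.Ioi x, f y := by
      rw [hF (-x)]
      have : ∀ y, f y = f (-y) := fun y => (hfsymm y).symm
      calc (∫ y in Set.Iic (-x), f y) = ∫ y in Set.Iic (-x), f (-y) := by
            exact setIntegral_congr_fun measurableSet_Iic (fun y _ => this y)
      _ = ∫ y in Set.Ioi (-(-x)), f y := integral_comp_neg_Iic (-x) f
      _ = ∫ y in Set.Ioi x, f y := by rw [neg_neg]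
    have h2 : F x + ∫ y in Set.Ioi x, f y = 1 := by
      rw [hF x, ← hfprob]
      exact intervalIntegral.integral_Iic_add_Ioi hfint.integrableOn hfint.integrableOn
    linarith
  -- integrability facts
  have hint1 : Integrable (fun t => (2 * F t - 1) * f t) :=
    hfint.bdd_mul ((hFmeas.const_mul 2).sub measurable_const).aestronglyMeasurable
      (Filter.Eventually.of_forall fun x => hFabs x)
  have hintsq : Integrable (fun t => f t ^ 2) := by
    have := hfint.bdd_mul hfmeas.aestronglyMeasurable (Filter.Eventually.of_forall hfbdd)
    simpa [pow_two] using this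
  -- the centered integral is zero (oddness)
  have hzero : (∫ t, (2 * F t - 1) * f t) = 0 := by
    have hodd : ∀ t, (2 * F (-t) - 1) * f (-t) = -((2 * F t - 1) * f t) := by
      intro t
      rw [hFsymm t, hfsymm t]
      ring
    have h1 : (∫ t, (2 * F t - 1) * f t) = ∫ t, (2 * F (-t) - 1) * f (-t) :=
      (integral_neg_eq_self (fun t => (2 * F t - 1) * f t) volume).symm
    have h2 : (∫ t, (2 * F (-t) - 1) * f (-t)) = -∫ t, (2 * F t - 1) * f t := by
      simp_rw [hodd]
      exact integral_neg _
    linarith [h1.trans h2]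
  refine ⟨2 * M + 1, by linarith, fun θ => ?_⟩
  -- change of variables
  have hcov : (∫ y : ℝ, (2 * F y - 1) * f (y - θ))
      = ∫ t : ℝ, (2 * F (t + θ) - 1) * f t := by
    have h := integral_add_right_eq_self (μ := volume)
      (fun y => (2 * F y - 1) * f (y - θ)) θ
    simp only [add_sub_cancel_right] at h
    exact h.symm
  -- integrabilities for the split
  have hint2 : Integrable (fun t => (2 * ((F (t + θ) - F t) - θ * f t)) * f t) := by
    refine hfint.bdd_mul (c := 2 * (M * θ ^ 2)) ?_ (Filter.Eventually.of_forall fun t => ?_)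
    · exact (((((hFmeas.comp (measurable_id.add_const θ)).sub hFmeas)).sub
        (hfmeas.const_mul θ)).const_mul 2).aestronglyMeasurable
    · calc ‖2 * ((F (t + θ) - F t) - θ * f t)‖
          = 2 * |(F (t + θ) - F t) - θ * f t| := by
            rw [Real.norm_eq_abs, abs_mul]; norm_num
      _ ≤ 2 * (M * θ ^ 2) := by linarith [hR θ t]
  have hint3 : Integrable (fun t => 2 * θ * f t ^ 2) := (hintsq.const_mul (2 * θ))
  -- pointwise decomposition
  have hdecomp : ∀ t, (2 * F (t + θ) - 1) * f t
      = (2 * F t - 1) * f t + (2 * ((F (t + θ) - F t) - θ * f t)) * f t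
        + 2 * θ * f t ^ 2 := by
    intro t; ring
  have hsplit : (∫ t : ℝ, (2 * F (t + θ) - 1) * f t)
      = (∫ t, (2 * F t - 1) * f t)
        + (∫ t, (2 * ((F (t + θ) - F t) - θ * f t)) * f t)
        + 2 * θ * ∫ y : ℝ, (f y) ^ 2 := by
    have e1 : (∫ t : ℝ, (2 * F (t + θ) - 1) * f t)
        = ∫ t, ((2 * F t - 1) * f t + (2 * ((F (t + θ) - F t) - θ * f t)) * f t
          + 2 * θ * f t ^ 2) :=
      integral_congr_ae (Filter.Eventually.of_forall (fun t => hdecomp t))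
    have hint12 : Integrable (fun t => (2 * F t - 1) * f t
        + (2 * ((F (t + θ) - F t) - θ * f t)) * f t) := hint1.add hint2
    rw [e1, integral_add hint12 hint3, integral_add hint1 hint2, integral_const_mul]
  -- bound the remainder integral
  have hrem : |∫ t, (2 * ((F (t + θ) - F t) - θ * f t)) * f t| ≤ 2 * M * θ ^ 2 := by
    have hb : ∀ t, |(2 * ((F (t + θ) - F t) - θ * f t)) * f t|
        ≤ (2 * (M * θ ^ 2)) * f t := by
      intro t
      rw [abs_mul, abs_of_nonneg (hfnn t), abs_mul, abs_two]
      have := hR θ t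
      have hf := hfnn t
      nlinarith [abs_nonneg ((F (t + θ) - F t) - θ * f t)]
    calc |∫ t, (2 * ((F (t + θ) - F t) - θ * f t)) * f t|
        ≤ ∫ t, |(2 * ((F (t + θ) - F t) - θ * f t)) * f t| :=
          by simpa only [Real.norm_eq_abs] using
            norm_integral_le_integral_norm (μ := (volume : Measure ℝ))
              (fun t => (2 * ((F (t + θ) - F t) - θ * f t)) * f t)
    _ ≤ ∫ t, (2 * (M * θ ^ 2)) * f t :=
          integral_mono hint2.abs (hfint.const_mul _) hb
    _ = 2 * M * θ ^ 2 := by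
          rw [integral_const_mul, hfprob]; ring
  rw [hcov, hsplit, hzero]
  calc |0 + (∫ t, (2 * ((F (t + θ) - F t) - θ * f t)) * f t)
      + 2 * θ * (∫ y : ℝ, (f y) ^ 2) - 2 * θ * ∫ y : ℝ, (f y) ^ 2|
      = |∫ t, (2 * ((F (t + θ) - F t) - θ * f t)) * f t| := by congr 1; ring
  _ ≤ 2 * M * θ ^ 2 := hrem
  _ ≤ (2 * M + 1) * θ ^ 2 := by nlinarith [sq_nonneg θ]
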